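/- arXiv:1907.12657 — 5 statements merged into one kernel-verified Lean document; each statement's English description precedes it below -/
import Mathlib

section
/- For nonnegative integers n ≤ m and any x, y: ∑_{k=0}^{n} C(n,k) (-1)^k (xk+y)^m = (-1)^n n! ∑_{j=n}^{m} C(m,j) x^j y^{m-j} S(j,n), where S denotes Stirling numbers of the second kind. -/
/-- Stirling numbers of the second kind. -/
def stirling2 : ℕ → ℕ → ℕ
  | 0, 0 => 1
  | 0, _ + 1 => 0
  | _ + 1, 0 => 0
  | n + 1, k + 1 => stirling2 n k + (k + 1) * stirling2 n (k + 1)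

lemma stirling2_eq_zero_of_lt : ∀ j n : ℕ, j < n → stirling2 j n = 0 := by
  intro j
  induction j with
  | zero =>
    intro n hn
    match n, hn with
    | n + 1, _ => rfl
  | succ j ih =>
    intro n hn
    match n, hn with
    | n + 1, hn =>
      have h1 : j < n := by omega
      have h2 : j < n + 1 := by omega
      simp [stirling2, ih n h1, ih (n + 1) h2]

lemma stirling2_zero_right : ∀ j : ℕ, stirling2 j 0 = if j = 0 then 1 else 0 := by
  intro j; cases j <;> simp [stirling2]

lemma sum_stirling2_zero (N M : ℕ) :
    ∑ i ∈ Finset.range (N + 1), M.choose i * stirling2 i 0 = 1 := by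
  rw [Finset.sum_eq_single 0]
  · simp [stirling2]
  · intro i _ hi
    rw [stirling2_zero_right, if_neg hi, Nat.mul_zero]
  · simp

lemma pascal_sum (n : ℕ) (g : ℕ → ℕ) :
    ∑ i ∈ Finset.range (n + 2), (n + 1).choose i * g i
      = ∑ i ∈ Finset.range (n + 1), n.choose i * (g i + g (i + 1)) := by
  rw [Finset.sum_range_succ' (fun i => (n + 1).choose i * g i) (n + 1)]
  have h1 : ∀ i, (n + 1).choose (i + 1) * g (i + 1)
      = n.choose i * g (i + 1) + n.choose (i + 1) * g (i + 1) := by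
    intro i; rw [Nat.choose_succ_succ, Nat.add_mul]
  simp only [h1, Finset.sum_add_distrib, Nat.choose_zero_right, one_mul, Nat.mul_add]
  have h2 : ∑ i ∈ Finset.range (n + 1), n.choose (i + 1) * g (i + 1) + g 0
      = ∑ i ∈ Finset.range (n + 1), n.choose i * g i := by
    have h3 := Finset.sum_range_succ' (fun i => n.choose i * g i) (n + 1)
    rw [Finset.sum_range_succ] at h3
    simp only [Nat.choose_succ_self, Nat.zero_mul, Nat.add_zero, Nat.choose_zero_right,
      one_mul] at h3
    omega
  omega

lemma stirling2_succ_succ : ∀ n k : ℕ,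
    stirling2 (n + 1) (k + 1) = ∑ i ∈ Finset.range (n + 1), n.choose i * stirling2 i k := by
  intro n
  induction n with
  | zero =>
    intro k
    show stirling2 0 k + (k + 1) * stirling2 0 (k + 1) = _
    simp [stirling2]
  | succ n ih =>
    intro k
    show stirling2 (n + 1) k + (k + 1) * stirling2 (n + 1) (k + 1) = _
    rw [pascal_sum]
    cases k with
    | zero =>
      have hz : stirling2 (n + 1) 0 = 0 := stirling2_zero_right (n + 1) ▸ by simp
      rw [hz, ih 0]
      simp only [Nat.zero_add, one_mul]
      have : ∀ i, stirling2 i 0 + stirling2 (i + 1) 0 = stirling2 i 0 := by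
        intro i; simp [stirling2_zero_right]
      simp only [this]
    | succ k =>
      rw [ih k, ih (k + 1)]
      have : ∀ i, stirling2 i (k + 1) + stirling2 (i + 1) (k + 1)
          = stirling2 i k + (k + 2) * stirling2 i (k + 1) := by
        intro i
        show stirling2 i (k + 1) + (stirling2 i k + (k + 1) * stirling2 i (k + 1)) = _
        ring
      simp only [this]
      rw [Finset.mul_sum, ← Finset.sum_add_distrib]
      exact Finset.sum_congr rfl fun i _ => by ring

lemma key_identity {R : Type*} [CommRing R] : ∀ j n : ℕ,
    ∑ k ∈ Finset.range (n + 1), (n.choose k : R) * (-1) ^ k * (k : R) ^ j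
      = (-1) ^ n * (n.factorial : R) * (stirling2 j n : R) := by
  intro j
  induction j using Nat.strong_induction_on with
  | _ j ih =>
    intro n
    match j, n with
    | 0, n =>
      have h : ((∑ i ∈ Finset.range (n + 1), ((-1) ^ i * n.choose i : ℤ) : ℤ) : R)
          = ((if n = 0 then 1 else 0 : ℤ) : R) := by
        rw [Int.alternating_sum_range_choose]
      push_cast at h
      have hl : ∑ k ∈ Finset.range (n + 1), (n.choose k : R) * (-1) ^ k * (k : R) ^ 0
          = ∑ k ∈ Finset.range (n + 1), ((-1 : R) ^ k * n.choose k) :=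
        Finset.sum_congr rfl fun k _ => by ring
      rw [hl, h]
      cases n with
      | zero => simp [stirling2]
      | succ n => simp [stirling2]
    | j + 1, 0 => simp [stirling2]
    | j + 1, n + 1 =>
      rw [Finset.sum_range_succ' (fun k => ((n + 1).choose k : R) * (-1) ^ k * (k : R) ^ (j + 1))
        (n + 1)]
      have hz : ((n + 1).choose 0 : R) * (-1) ^ 0 * ((0 : ℕ) : R) ^ (j + 1) = 0 := by simp
      rw [hz, add_zero]
      have hterm : ∀ k, ((n + 1).choose (k + 1) : R) * (-1) ^ (k + 1) * ((k + 1 : ℕ) : R) ^ (j + 1)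
          = -((n + 1 : ℕ) : R) * ((n.choose k : R) * (-1) ^ k * ((k : R) + 1) ^ j) := by
        intro k
        have hc : (((n + 1).choose (k + 1) * (k + 1) : ℕ) : R) = (((n + 1) * n.choose k : ℕ) : R) := by
          rw [← Nat.add_one_mul_choose_eq]
        push_cast at hc ⊢
        calc ((n + 1).choose (k + 1) : R) * (-1) ^ (k + 1) * ((k : R) + 1) ^ (j + 1)
            = (((n + 1).choose (k + 1) : R) * ((k : R) + 1)) * ((-1) ^ (k + 1) * ((k : R) + 1) ^ j) := by
              ring
          _ = (((n : R) + 1) * (n.choose k : R)) * ((-1) ^ (k + 1) * ((k : R) + 1) ^ j) := by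
              rw [hc]
          _ = -((n : R) + 1) * ((n.choose k : R) * (-1) ^ k * ((k : R) + 1) ^ j) := by
              rw [pow_succ]; ring
      simp only [hterm]
      rw [← Finset.mul_sum]
      have hexp : ∀ k : ℕ, ((k : R) + 1) ^ j
          = ∑ i ∈ Finset.range (j + 1), (j.choose i : R) * (k : R) ^ i := by
        intro k
        rw [add_pow]
        exact Finset.sum_congr rfl fun i _ => by ring
      have hswap : ∑ k ∈ Finset.range (n + 1),
            (n.choose k : R) * (-1) ^ k * ((k : R) + 1) ^ j
          = ∑ i ∈ Finset.range (j + 1), (j.choose i : R) *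
              ∑ k ∈ Finset.range (n + 1), (n.choose k : R) * (-1) ^ k * (k : R) ^ i := by
        simp only [hexp, Finset.mul_sum]
        rw [Finset.sum_comm]
        exact Finset.sum_congr rfl fun i _ => Finset.sum_congr rfl fun k _ => by ring
      rw [hswap]
      have hih : ∀ i ∈ Finset.range (j + 1),
          (j.choose i : R) * ∑ k ∈ Finset.range (n + 1),
              (n.choose k : R) * (-1) ^ k * (k : R) ^ i
            = (j.choose i : R) * ((-1) ^ n * (n.factorial : R) * (stirling2 i n : R)) := by
        intro i hi
        rw [ih i (Finset.mem_range.mp hi)]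
      rw [Finset.sum_congr rfl hih]
      rw [stirling2_succ_succ, Nat.factorial_succ]
      push_cast
      rw [Finset.mul_sum, Finset.mul_sum]
      refine Finset.sum_congr rfl fun i _ => ?_
      rw [pow_succ]
      ring

theorem sum_binom_neg_pow_eq_stirling {R : Type*} [CommRing R] (n m : ℕ) (h : n ≤ m)
    (x y : R) :
    ∑ k ∈ Finset.range (n + 1), (n.choose k : R) * (-1) ^ k * (x * k + y) ^ m =
      (-1) ^ n * (n.factorial : R) *
        ∑ j ∈ Finset.Icc n m, (m.choose j : R) * x ^ j * y ^ (m - j) * (stirling2 j n : R) := by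
  have hsub : Finset.Icc n m ⊆ Finset.range (m + 1) := by
    intro j hj
    rw [Finset.mem_range]
    exact Nat.lt_succ_of_le (Finset.mem_Icc.mp hj).2
  have hzero : ∀ j ∈ Finset.range (m + 1), j ∉ Finset.Icc n m →
      (m.choose j : R) * x ^ j * y ^ (m - j) * (stirling2 j n : R) = 0 := by
    intro j hj hj'
    have hjm : j ≤ m := Nat.lt_succ_iff.mp (Finset.mem_range.mp hj)
    have hjn : j < n := by
      by_contra hc
      exact hj' (Finset.mem_Icc.mpr ⟨Nat.le_of_not_lt hc, hjm⟩)
    rw [stirling2_eq_zero_of_lt j n hjn]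
    simp
  rw [Finset.sum_subset hsub hzero]
  have hlhs : ∀ k ∈ Finset.range (n + 1),
      (n.choose k : R) * (-1) ^ k * (x * k + y) ^ m
        = ∑ j ∈ Finset.range (m + 1),
            (m.choose j : R) * x ^ j * y ^ (m - j) * ((n.choose k : R) * (-1) ^ k * (k : R) ^ j) := by
    intro k _
    rw [add_pow, Finset.mul_sum]
    exact Finset.sum_congr rfl fun j _ => by rw [mul_pow]; ring
  rw [Finset.sum_congr rfl hlhs, Finset.sum_comm]
  rw [Finset.mul_sum]
  refine Finset.sum_congr rfl fun j _ => ?_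
  rw [← Finset.mul_sum, key_identity]
  ring
end

section
/- For all (k1,k2) ∈ ℤ²_{≥0} and ℓ ≥ 0: k1!·k2!·C(k1,k2,ℓ) = ∑_{0≤i≤k1, 0≤j≤k2} binom(k1,i)·binom(k2,j)·(-1)^{k1+k2-i-j}·(i·x + j·y + z)^ℓ, as polynomials in ℤ[x,y,z]. -/
section AuxStirling
open Finset

/-- alternating sum with sign `(-1)^i`. -/
def G (n k : ℕ) : ℤ := ∑ i ∈ range (k+1), (-1:ℤ)^i * (k.choose i) * (i:ℤ)^n

lemma G_zero (k : ℕ) : G 0 k = if k = 0 then 1 else 0 := by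
  unfold G
  simp only [pow_zero, mul_one]
  exact Int.alternating_sum_range_choose

lemma G_succ_zero (n : ℕ) : G (n+1) 0 = 0 := by simp [G]

lemma G_shift (n k : ℕ) :
    G (n+1) (k+1) = -(k+1) * ∑ j ∈ range (k+1), (-1:ℤ)^j * (k.choose j) * ((j:ℤ)+1)^n := by
  unfold G
  rw [Finset.sum_range_succ' _ (k+1)]
  simp only [Nat.cast_zero, zero_pow (Nat.succ_ne_zero n), mul_zero, add_zero]
  rw [Finset.mul_sum]
  refine Finset.sum_congr rfl fun j hj => ?_
  have hc : ((k+1) : ℤ) * (k.choose j) = ((k+1).choose (j+1)) * (j+1) := by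
    exact_mod_cast congrArg (Nat.cast : ℕ → ℤ) (Nat.add_one_mul_choose_eq k j)
  push_cast
  rw [pow_succ]
  linear_combination ((-1:ℤ)^j * ((j:ℤ)+1)^n) * hc

lemma H_eq (n k : ℕ) :
    ∑ j ∈ range (k+1), (-1:ℤ)^j * (k.choose j) * ((j:ℤ)+1)^n = G n k - G n (k+1) := by
  have h1 : G n (k+1) = ∑ j ∈ range (k+1),
      (-1:ℤ)^(j+1) * ((k.choose j : ℤ) + (k.choose (j+1) : ℤ)) * ((j:ℤ)+1)^n + (0:ℤ)^n := by
    unfold G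
    rw [Finset.sum_range_succ' _ (k+1)]
    simp [Nat.choose_succ_succ, pow_succ]
  have h2 : ∑ j ∈ range (k+1), (-1:ℤ)^j * (k.choose (j+1) : ℤ) * ((j:ℤ)+1)^n
      = (0:ℤ)^n - G n k := by
    rw [Finset.sum_range_succ]
    unfold G
    rw [Finset.sum_range_succ' _ k]
    simp [Nat.choose_succ_self, pow_succ]
  have h3 : G n (k+1) = -(∑ j ∈ range (k+1), (-1:ℤ)^j * (k.choose j) * ((j:ℤ)+1)^n)
      - ((0:ℤ)^n - G n k) + (0:ℤ)^n := by
    rw [h1, ← h2]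
    rw [← Finset.sum_neg_distrib, ← Finset.sum_sub_distrib]
    congr 1
    refine Finset.sum_congr rfl fun j hj => ?_
    rw [pow_succ]
    ring
  linarith

lemma G_succ_succ (n k : ℕ) : G (n+1) (k+1) = (k+1) * (G n (k+1) - G n k) := by
  rw [G_shift, H_eq]; ring

lemma key (n k : ℕ) : G n k = (-1:ℤ)^k * k.factorial * stirling2 n k := by
  induction n generalizing k with
  | zero =>
    rw [G_zero]
    cases k with
    | zero => simp [stirling2]
    | succ k => simp [stirling2]
  | succ n ih =>
    cases k with
    | zero => simp [G_succ_zero, stirling2]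
    | succ k =>
      rw [G_succ_succ, ih, ih, stirling2]
      push_cast [Nat.factorial_succ]
      ring

lemma key' (n k : ℕ) :
    ∑ i ∈ range (k+1), (-1:ℤ)^(k-i) * (k.choose i) * (i:ℤ)^n
      = (k.factorial : ℤ) * stirling2 n k := by
  have h : ∀ i ∈ range (k+1), (-1:ℤ)^(k-i) * (k.choose i) * (i:ℤ)^n
      = (-1:ℤ)^k * ((-1:ℤ)^i * (k.choose i) * (i:ℤ)^n) := by
    intro i hi
    have hik : i ≤ k := by simpa [Nat.lt_succ_iff] using hi
    have h1 : (-1:ℤ)^(k-i) * (-1:ℤ)^i = (-1:ℤ)^k := by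
      rw [← pow_add, Nat.sub_add_cancel hik]
    have hsq : (-1:ℤ)^i * (-1:ℤ)^i = 1 := by
      rw [← pow_add]; exact Even.neg_one_pow ⟨i, rfl⟩
    have h2 : (-1:ℤ)^(k-i) = (-1:ℤ)^k * (-1:ℤ)^i := by
      calc (-1:ℤ)^(k-i) = (-1:ℤ)^(k-i) * ((-1:ℤ)^i * (-1:ℤ)^i) := by rw [hsq, mul_one]
        _ = (-1:ℤ)^k * (-1:ℤ)^i := by rw [← mul_assoc, h1]
    rw [h2]; ring
  rw [Finset.sum_congr rfl h, ← Finset.mul_sum]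
  show (-1:ℤ)^k * G n k = _
  rw [key, ← mul_assoc, ← mul_assoc, ← pow_add]
  rw [Even.neg_one_pow ⟨k, rfl⟩, one_mul]

open MvPolynomial

lemma scalar (k1 k2 t u : ℕ) :
    (∑ i ∈ range (k1+1), ∑ j ∈ range (k2+1),
      ((k1.choose i * k2.choose j : ℕ) : ℤ) * (-1)^(k1+k2-i-j) * ((i:ℤ)^t * (j:ℤ)^u))
    = ((k1.factorial * k2.factorial : ℕ) : ℤ) * (stirling2 t k1 * stirling2 u k2) := by
  calc (∑ i ∈ range (k1+1), ∑ j ∈ range (k2+1),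
        ((k1.choose i * k2.choose j : ℕ) : ℤ) * (-1)^(k1+k2-i-j) * ((i:ℤ)^t * (j:ℤ)^u))
      = ∑ i ∈ range (k1+1), ∑ j ∈ range (k2+1),
        ((-1:ℤ)^(k1-i) * (k1.choose i) * (i:ℤ)^t)
          * ((-1:ℤ)^(k2-j) * (k2.choose j) * (j:ℤ)^u) := by
        refine Finset.sum_congr rfl fun i hi => Finset.sum_congr rfl fun j hj => ?_
        have hi' : i ≤ k1 := by simpa [Nat.lt_succ_iff] using hi
        have hj' : j ≤ k2 := by simpa [Nat.lt_succ_iff] using hj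
        have he : k1 + k2 - i - j = (k1 - i) + (k2 - j) := by omega
        rw [he, pow_add]; push_cast; ring
    _ = (∑ i ∈ range (k1+1), (-1:ℤ)^(k1-i) * (k1.choose i) * (i:ℤ)^t)
          * (∑ j ∈ range (k2+1), (-1:ℤ)^(k2-j) * (k2.choose j) * (j:ℤ)^u) :=
        (Finset.sum_mul_sum _ _ _ _).symm
    _ = _ := by rw [key', key']; push_cast; ring

end AuxStirling

open MvPolynomial in
/-- The polynomial `C(k1,k2,ℓ) = ∑_{i1 ≥ k1, i2 ≥ k2, i1+i2 ≤ ℓ}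
binom(ℓ,i1) binom(ℓ-i1,i2) S(i1,k1) S(i2,k2) x^{i1} y^{i2} z^{ℓ-i1-i2}` in `ℤ[x,y,z]`
(the conditions `i1 ≥ k1`, `i2 ≥ k2` are automatic since `S(i,k) = 0` for `i < k`). -/
noncomputable def Cpoly (k1 k2 l : ℕ) : MvPolynomial (Fin 3) ℤ :=
  ∑ i1 ∈ Finset.range (l + 1), ∑ i2 ∈ Finset.range (l + 1 - i1),
    (MvPolynomial.C ((l.choose i1 * (l - i1).choose i2
        * stirling2 i1 k1 * stirling2 i2 k2 : ℕ) : ℤ)) *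
      X 0 ^ i1 * X 1 ^ i2 * X 2 ^ (l - i1 - i2)

open MvPolynomial in
/-- `A_{ij} = i·x + j·y + z`. -/
noncomputable def Apoly (i j : ℕ) : MvPolynomial (Fin 3) ℤ :=
  (i : MvPolynomial (Fin 3) ℤ) * X 0 + (j : MvPolynomial (Fin 3) ℤ) * X 1 + X 2


section AuxMain
open MvPolynomial Finset

lemma Apoly_pow (i j l : ℕ) : Apoly i j ^ l = ∑ m ∈ range (l+1), ∑ t ∈ range (m+1),
    C (((l.choose m * (m.choose t * (i^t * j^(m-t)))) : ℕ) : ℤ)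
      * X 0 ^ t * X 1 ^ (m-t) * X 2 ^ (l-m) := by
  rw [Apoly, add_pow]
  refine Finset.sum_congr rfl fun m hm => ?_
  rw [add_pow, Finset.sum_mul, Finset.sum_mul]
  refine Finset.sum_congr rfl fun t ht => ?_
  push_cast
  rw [mul_pow, mul_pow]
  simp only [map_mul, map_pow, map_natCast]
  ring

lemma lhs_eq (k1 k2 l : ℕ) :
    (MvPolynomial.C ((k1.factorial * k2.factorial : ℕ) : ℤ)) * Cpoly k1 k2 l
    = ∑ m ∈ range (l + 1), ∑ t ∈ range (m + 1),
        MvPolynomial.C ((k1.factorial * k2.factorial : ℕ) : ℤ)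
          * MvPolynomial.C (((l.choose m * (m.choose t
              * (stirling2 t k1 * stirling2 (m - t) k2))) : ℕ) : ℤ)
          * (X 0 ^ t * X 1 ^ (m - t) * X 2 ^ (l - m)) := by
  rw [Cpoly, Finset.mul_sum]
  simp_rw [Finset.mul_sum]
  rw [Finset.sum_sigma', Finset.sum_sigma']
  refine Finset.sum_nbij' (i := fun p => (⟨p.1 + p.2, p.1⟩ : (_ : ℕ) × ℕ))
    (j := fun q => (⟨q.2, q.1 - q.2⟩ : (_ : ℕ) × ℕ)) ?_ ?_ ?_ ?_ ?_
  · rintro ⟨a, b⟩ h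
    simp only [Finset.mem_sigma, Finset.mem_range] at h ⊢
    omega
  · rintro ⟨a, b⟩ h
    simp only [Finset.mem_sigma, Finset.mem_range] at h ⊢
    omega
  · rintro ⟨a, b⟩ h; simp
  · rintro ⟨a, b⟩ h
    simp only [Finset.mem_sigma, Finset.mem_range] at h
    simp only [Sigma.mk.inj_iff, heq_eq_eq]
    exact ⟨by omega, trivial⟩
  · rintro ⟨a, b⟩ h
    simp only [Finset.mem_sigma, Finset.mem_range] at h
    have hab : a + b ≤ l := by omega
    have hchoose : l.choose (a+b) * (a+b).choose a = l.choose a * (l - a).choose b := by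
      have := Nat.choose_mul (n := l) (k := a + b) (s := a) (Nat.le_add_right a b)
      simpa using this
    have e1 : a + b - a = b := by omega
    have e2 : l - a - b = l - (a + b) := by omega
    simp only [e1, e2]
    rw [← hchoose]
    push_cast
    simp only [map_mul, map_natCast]
    ring

lemma rhs_eq (k1 k2 l : ℕ) :
    (∑ i ∈ Finset.range (k1 + 1), ∑ j ∈ Finset.range (k2 + 1),
        (MvPolynomial.C ((k1.choose i * k2.choose j : ℕ) : ℤ))
          * (-1) ^ (k1 + k2 - i - j) * Apoly i j ^ l)
    = ∑ m ∈ range (l + 1), ∑ t ∈ range (m + 1),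
        MvPolynomial.C ((k1.factorial * k2.factorial : ℕ) : ℤ)
          * MvPolynomial.C (((l.choose m * (m.choose t
              * (stirling2 t k1 * stirling2 (m - t) k2))) : ℕ) : ℤ)
          * (X 0 ^ t * X 1 ^ (m - t) * X 2 ^ (l - m)) := by
  have step1 : ∀ i ∈ range (k1+1), ∀ j ∈ range (k2+1),
      (MvPolynomial.C ((k1.choose i * k2.choose j : ℕ) : ℤ))
          * (-1) ^ (k1 + k2 - i - j) * Apoly i j ^ l
      = ∑ m ∈ range (l+1), ∑ t ∈ range (m+1),
          MvPolynomial.C (((k1.choose i * k2.choose j : ℕ) : ℤ) * (-1)^(k1+k2-i-j)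
              * ((i:ℤ)^t * (j:ℤ)^(m-t)) * ((l.choose m * m.choose t : ℕ) : ℤ))
            * (X 0 ^ t * X 1 ^ (m-t) * X 2 ^ (l-m)) := by
    intro i _ j _
    rw [Apoly_pow, Finset.mul_sum]
    refine Finset.sum_congr rfl fun m _ => ?_
    rw [Finset.mul_sum]
    refine Finset.sum_congr rfl fun t _ => ?_
    simp only [map_mul, map_pow, map_natCast, map_neg, map_one]
    push_cast
    ring
  rw [Finset.sum_congr rfl (fun i hi => Finset.sum_congr rfl (step1 i hi))]
  rw [Finset.sum_congr rfl (fun i _ => Finset.sum_comm)]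
  rw [Finset.sum_comm]
  refine Finset.sum_congr rfl fun m _ => ?_
  rw [Finset.sum_congr rfl (fun i _ => Finset.sum_comm)]
  rw [Finset.sum_comm]
  refine Finset.sum_congr rfl fun t _ => ?_
  simp_rw [← Finset.sum_mul]
  simp_rw [← map_sum]
  rw [show (∑ x ∈ range (k1+1), ∑ y ∈ range (k2+1),
      ((k1.choose x * k2.choose y : ℕ) : ℤ) * (-1)^(k1+k2-x-y)
        * ((x:ℤ)^t * (y:ℤ)^(m-t)) * ((l.choose m * m.choose t : ℕ) : ℤ))
    = (∑ x ∈ range (k1+1), ∑ y ∈ range (k2+1),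
      ((k1.choose x * k2.choose y : ℕ) : ℤ) * (-1)^(k1+k2-x-y)
        * ((x:ℤ)^t * (y:ℤ)^(m-t))) * ((l.choose m * m.choose t : ℕ) : ℤ) by
      rw [Finset.sum_mul]; exact Finset.sum_congr rfl fun x _ => (Finset.sum_mul _ _ _).symm]
  rw [scalar]
  simp only [map_mul, map_natCast]
  push_cast
  ring

end AuxMain

theorem factorial_mul_Cpoly_eq_alt_sum (k1 k2 l : ℕ) :
    (MvPolynomial.C ((k1.factorial * k2.factorial : ℕ) : ℤ)) * Cpoly k1 k2 l =
      ∑ i ∈ Finset.range (k1 + 1), ∑ j ∈ Finset.range (k2 + 1),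
        (MvPolynomial.C ((k1.choose i * k2.choose j : ℕ) : ℤ))
          * (-1) ^ (k1 + k2 - i - j) * Apoly i j ^ l := by
  rw [lhs_eq, rhs_eq]
end

section
/- For all (k1,k2) ∈ ℤ²_{≥0} with (k1,k2) ≠ (0,0): ∑_{(i,j)∈S°} binom(k1,i)·binom(k2,j)·(-1)^{k1+k2-i-j}·(i·x + j·y + z)^ℓ = -∑_{(i,j)∈S°} binom(k1,i)·binom(k2,j)·i!·j!·C(i,j,ℓ), where S° = {(i,j) : 0≤i≤k1, 0≤j≤k2} \ {(k1,k2)}, as polynomials in ℤ[x,y,z] for every ℓ ≥ 0. -/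
open Finset

lemma stirling2_eq_zero : ∀ {n k : ℕ}, n < k → stirling2 n k = 0
  | 0, 0, h => absurd h (by omega)
  | 0, _ + 1, _ => rfl
  | _ + 1, 0, h => absurd h (by omega)
  | n + 1, k + 1, h => by
      rw [stirling2, stirling2_eq_zero (by omega : n < k),
        stirling2_eq_zero (by omega : n < k + 1)]
      ring

lemma pow_eq_sum_stirling (i n : ℕ) :
    i ^ n = ∑ a ∈ range (i + 1), i.choose a * a.factorial * stirling2 n a := by
  induction n with
  | zero =>
    rw [Finset.sum_eq_single 0]
    · simp [stirling2]
    · rintro (_ | b) hb hb0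
      · exact absurd rfl hb0
      · simp [stirling2]
    · simp
  | succ n ih =>
    have key : ∑ a ∈ range (i + 1), i * (i.choose a * a.factorial * stirling2 n a)
        = ∑ a ∈ range (i + 1), (i.choose (a + 1) * (a + 1).factorial * stirling2 n a
          + i.choose a * a.factorial * (a * stirling2 n a)) := by
      refine Finset.sum_congr rfl fun a ha => ?_
      have ha' : a ≤ i := by simpa [Nat.lt_succ_iff] using ha
      have h1 : i.choose (a + 1) * (a + 1) = i.choose a * (i - a) :=
        Nat.choose_succ_right_eq i a
      have h2 : i * i.choose a = i.choose (a + 1) * (a + 1) + a * i.choose a := by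
        rw [h1, Nat.mul_comm a (i.choose a), ← Nat.mul_add, Nat.sub_add_cancel ha',
          Nat.mul_comm]
      calc i * (i.choose a * a.factorial * stirling2 n a)
          = (i * i.choose a) * a.factorial * stirling2 n a := by ring
        _ = (i.choose (a + 1) * (a + 1) + a * i.choose a) * a.factorial * stirling2 n a := by
            rw [h2]
        _ = _ := by rw [Nat.factorial_succ]; ring
    have e1 : ∑ a ∈ range (i + 1), i.choose (a + 1) * (a + 1).factorial * stirling2 n a
        = ∑ a ∈ range i, i.choose (a + 1) * (a + 1).factorial * stirling2 n a := by
      rw [Finset.sum_range_succ, Nat.choose_succ_self, Nat.zero_mul, Nat.zero_mul, Nat.add_zero]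
    have e2 : ∑ a ∈ range (i + 1), i.choose a * a.factorial * (a * stirling2 n a)
        = ∑ a ∈ range i, i.choose (a + 1) * (a + 1).factorial * ((a + 1) * stirling2 n (a + 1)) := by
      rw [Finset.sum_range_succ']
      simp
    calc i ^ (n + 1) = i * i ^ n := by ring
      _ = ∑ a ∈ range (i + 1), i * (i.choose a * a.factorial * stirling2 n a) := by
          rw [ih, Finset.mul_sum]
      _ = ∑ a ∈ range i, i.choose (a + 1) * (a + 1).factorial * stirling2 n a
          + ∑ a ∈ range i, i.choose (a + 1) * (a + 1).factorial * ((a + 1) * stirling2 n (a + 1)) := by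
          rw [key, Finset.sum_add_distrib, e1, e2]
      _ = ∑ a ∈ range i, i.choose (a + 1) * (a + 1).factorial * stirling2 (n + 1) (a + 1) := by
          rw [← Finset.sum_add_distrib]
          refine Finset.sum_congr rfl fun a _ => ?_
          rw [stirling2]
          ring
      _ = ∑ a ∈ range (i + 1), i.choose a * a.factorial * stirling2 (n + 1) a := by
          rw [Finset.sum_range_succ']
          simp [stirling2]

lemma delta_sum (k a : ℕ) :
    ∑ p ∈ range (k + 1), (-1 : ℤ) ^ (k - p) * (k.choose p) * (p.choose a)
      = if a = k then 1 else 0 := by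
  rcases lt_trichotomy a k with hak | rfl | hka
  · rw [if_neg (by omega)]
    have hsplit : k + 1 = a + (k - a + 1) := by omega
    rw [hsplit, Finset.sum_range_add]
    have hz : ∑ p ∈ range a, (-1 : ℤ) ^ (k - p) * (k.choose p) * (p.choose a) = 0 := by
      refine Finset.sum_eq_zero fun p hp => ?_
      rw [Nat.choose_eq_zero_of_lt (show p < a by simpa using hp)]
      ring
    rw [hz, zero_add]
    have hterm : ∀ m ∈ range (k - a + 1),
        (-1 : ℤ) ^ (k - (a + m)) * (k.choose (a + m)) * ((a + m).choose a)
          = (k.choose a : ℤ) * ((-1) ^ (k - a) * ((-1) ^ m * ((k - a).choose m))) := by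
      intro m hm
      have hm' : m ≤ k - a := by simpa [Nat.lt_succ_iff] using hm
      have hc : k.choose (a + m) * (a + m).choose a = k.choose a * (k - a).choose m := by
        rw [Nat.choose_mul (by omega)]
        congr 1
        · congr 1; omega
      have hsign : (-1 : ℤ) ^ (k - (a + m)) = (-1) ^ (k - a) * (-1) ^ m := by
        have : (-1 : ℤ) ^ (k - (a + m)) * ((-1) ^ m * (-1) ^ m) = (-1) ^ (k - a) * (-1) ^ m := by
          rw [← pow_add, ← pow_add, ← pow_add]
          congr 1
          omega
        have h2 : ((-1 : ℤ)) ^ m * (-1) ^ m = 1 := by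
          rw [← pow_add]
          exact Even.neg_one_pow ⟨m, rfl⟩
        rw [h2, mul_one] at this
        exact this
      calc (-1 : ℤ) ^ (k - (a + m)) * (k.choose (a + m)) * ((a + m).choose a)
          = (-1 : ℤ) ^ (k - (a + m)) * ((k.choose (a + m) * (a + m).choose a : ℕ) : ℤ) := by
            push_cast; ring
        _ = (-1 : ℤ) ^ (k - (a + m)) * ((k.choose a * (k - a).choose m : ℕ) : ℤ) := by rw [hc]
        _ = _ := by rw [hsign]; push_cast; ring
    rw [Finset.sum_congr rfl hterm, ← Finset.mul_sum, ← Finset.mul_sum,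
      Int.alternating_sum_range_choose_of_ne (by omega : k - a ≠ 0)]
    ring
  · rw [if_pos rfl, Finset.sum_eq_single a]
    · simp
    · intro p hp hpa
      have hp' : p < a := by
        have := Finset.mem_range.mp hp
        omega
      rw [Nat.choose_eq_zero_of_lt hp']
      ring
    · intro hc
      exact absurd (Finset.self_mem_range_succ a) hc
  · rw [if_neg (by omega)]
    refine Finset.sum_eq_zero fun p hp => ?_
    have hp' : p ≤ k := by simpa [Nat.lt_succ_iff] using hp
    rw [Nat.choose_eq_zero_of_lt (show p < a by omega)]
    ring

section Generic

variable {R : Type*} [CommRing R]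

/-- Generic version of `Cpoly` in any commutative ring. -/
def Cgen (x y z : R) (k1 k2 l : ℕ) : R :=
  ∑ i1 ∈ range (l + 1), ∑ i2 ∈ range (l + 1 - i1),
    ((l.choose i1 * (l - i1).choose i2 * stirling2 i1 k1 * stirling2 i2 k2 : ℕ) : R)
      * x ^ i1 * y ^ i2 * z ^ (l - i1 - i2)

lemma sum_range_extend {n m : ℕ} (h : n ≤ m) (g : ℕ → R) (hg : ∀ p, n ≤ p → g p = 0) :
    ∑ p ∈ range n, g p = ∑ p ∈ range m, g p :=
  Finset.sum_subset (Finset.range_subset_range.mpr h)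
    (fun p _ hnp => hg p (by simpa using hnp))

lemma Cgen_full (x y z : R) (k1 k2 l : ℕ) :
    Cgen x y z k1 k2 l = ∑ i1 ∈ range (l + 1), ∑ i2 ∈ range (l + 1),
      ((l.choose i1 * (l - i1).choose i2 * stirling2 i1 k1 * stirling2 i2 k2 : ℕ) : R)
        * x ^ i1 * y ^ i2 * z ^ (l - i1 - i2) := by
  refine Finset.sum_congr rfl fun i1 h1 => ?_
  refine sum_range_extend (by omega) _ fun p hp => ?_
  have h1' : i1 ≤ l := by simpa [Nat.lt_succ_iff] using h1
  rw [Nat.choose_eq_zero_of_lt (show l - i1 < p by omega)]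
  simp

lemma trinomial_expand (x y z : R) (i j l : ℕ) :
    ((i : R) * x + (j : R) * y + z) ^ l
      = ∑ i1 ∈ range (l + 1), ∑ i2 ∈ range (l + 1 - i1),
          ((l.choose i1 * (l - i1).choose i2 : ℕ) : R) * ((i : R) ^ i1 * (j : R) ^ i2)
            * (x ^ i1 * y ^ i2 * z ^ (l - i1 - i2)) := by
  rw [add_assoc, add_pow]
  refine Finset.sum_congr rfl fun i1 h1 => ?_
  have h1' : i1 ≤ l := by simpa [Nat.lt_succ_iff] using h1
  rw [add_pow, Finset.mul_sum, Finset.sum_mul]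
  have hr : l + 1 - i1 = l - i1 + 1 := by omega
  rw [hr]
  refine Finset.sum_congr rfl fun i2 h2 => ?_
  push_cast
  ring

lemma trinomial_full (x y z : R) (i j l : ℕ) :
    ((i : R) * x + (j : R) * y + z) ^ l
      = ∑ i1 ∈ range (l + 1), ∑ i2 ∈ range (l + 1),
          ((l.choose i1 * (l - i1).choose i2 : ℕ) : R) * ((i : R) ^ i1 * (j : R) ^ i2)
            * (x ^ i1 * y ^ i2 * z ^ (l - i1 - i2)) := by
  rw [trinomial_expand]
  refine Finset.sum_congr rfl fun i1 h1 => ?_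
  refine sum_range_extend (by omega) _ fun p hp => ?_
  have h1' : i1 ≤ l := by simpa [Nat.lt_succ_iff] using h1
  rw [Nat.choose_eq_zero_of_lt (show l - i1 < p by omega)]
  simp

lemma cast_pow_eq_sum (i n : ℕ) :
    ((i : R)) ^ n = ∑ a ∈ range (i + 1),
      ((i.choose a * a.factorial * stirling2 n a : ℕ) : R) := by
  have := congrArg (fun m : ℕ => (m : R)) (pow_eq_sum_stirling i n)
  push_cast at this
  simpa using this

lemma pow_expand (x y z : R) (i j l : ℕ) :
    ((i : R) * x + (j : R) * y + z) ^ l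
      = ∑ a ∈ range (i + 1), ∑ b ∈ range (j + 1),
          ((i.choose a * j.choose b * a.factorial * b.factorial : ℕ) : R)
            * Cgen x y z a b l := by
  symm
  calc ∑ a ∈ range (i + 1), ∑ b ∈ range (j + 1),
        ((i.choose a * j.choose b * a.factorial * b.factorial : ℕ) : R) * Cgen x y z a b l
      = ∑ a ∈ range (i + 1), ∑ b ∈ range (j + 1), ∑ i1 ∈ range (l + 1), ∑ i2 ∈ range (l + 1),
          ((i.choose a * j.choose b * a.factorial * b.factorial : ℕ) : R)
            * (((l.choose i1 * (l - i1).choose i2 * stirling2 i1 a * stirling2 i2 b : ℕ) : R)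
              * x ^ i1 * y ^ i2 * z ^ (l - i1 - i2)) := by
        refine Finset.sum_congr rfl fun a _ => Finset.sum_congr rfl fun b _ => ?_
        rw [Cgen_full, Finset.mul_sum]
        exact Finset.sum_congr rfl fun i1 _ => Finset.mul_sum _ _ _
    _ = ∑ a ∈ range (i + 1), ∑ i1 ∈ range (l + 1), ∑ b ∈ range (j + 1), ∑ i2 ∈ range (l + 1),
          ((i.choose a * j.choose b * a.factorial * b.factorial : ℕ) : R)
            * (((l.choose i1 * (l - i1).choose i2 * stirling2 i1 a * stirling2 i2 b : ℕ) : R)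
              * x ^ i1 * y ^ i2 * z ^ (l - i1 - i2)) :=
        Finset.sum_congr rfl fun a _ => Finset.sum_comm
    _ = ∑ i1 ∈ range (l + 1), ∑ a ∈ range (i + 1), ∑ b ∈ range (j + 1), ∑ i2 ∈ range (l + 1),
          ((i.choose a * j.choose b * a.factorial * b.factorial : ℕ) : R)
            * (((l.choose i1 * (l - i1).choose i2 * stirling2 i1 a * stirling2 i2 b : ℕ) : R)
              * x ^ i1 * y ^ i2 * z ^ (l - i1 - i2)) := Finset.sum_comm
    _ = ∑ i1 ∈ range (l + 1), ∑ a ∈ range (i + 1), ∑ i2 ∈ range (l + 1), ∑ b ∈ range (j + 1),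
          ((i.choose a * j.choose b * a.factorial * b.factorial : ℕ) : R)
            * (((l.choose i1 * (l - i1).choose i2 * stirling2 i1 a * stirling2 i2 b : ℕ) : R)
              * x ^ i1 * y ^ i2 * z ^ (l - i1 - i2)) :=
        Finset.sum_congr rfl fun i1 _ => Finset.sum_congr rfl fun a _ => Finset.sum_comm
    _ = ∑ i1 ∈ range (l + 1), ∑ i2 ∈ range (l + 1), ∑ a ∈ range (i + 1), ∑ b ∈ range (j + 1),
          ((i.choose a * j.choose b * a.factorial * b.factorial : ℕ) : R)
            * (((l.choose i1 * (l - i1).choose i2 * stirling2 i1 a * stirling2 i2 b : ℕ) : R)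
              * x ^ i1 * y ^ i2 * z ^ (l - i1 - i2)) :=
        Finset.sum_congr rfl fun i1 _ => Finset.sum_comm
    _ = ∑ i1 ∈ range (l + 1), ∑ i2 ∈ range (l + 1),
          ((l.choose i1 * (l - i1).choose i2 : ℕ) : R) * ((i : R) ^ i1 * (j : R) ^ i2)
            * (x ^ i1 * y ^ i2 * z ^ (l - i1 - i2)) := by
        refine Finset.sum_congr rfl fun i1 _ => Finset.sum_congr rfl fun i2 _ => ?_
        conv_rhs => rw [cast_pow_eq_sum i i1, cast_pow_eq_sum j i2,
          Finset.sum_mul_sum, Finset.mul_sum, Finset.sum_mul]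
        refine Finset.sum_congr rfl fun a _ => ?_
        conv_rhs => rw [Finset.mul_sum, Finset.sum_mul]
        refine Finset.sum_congr rfl fun b _ => ?_
        push_cast
        ring
    _ = ((i : R) * x + (j : R) * y + z) ^ l := (trinomial_full x y z i j l).symm


lemma delta_sum_R (k a : ℕ) :
    ∑ p ∈ range (k + 1), (-1 : R) ^ (k - p) * (k.choose p : R) * (p.choose a : R)
      = if a = k then 1 else 0 := by
  have h := delta_sum k a
  calc ∑ p ∈ range (k + 1), (-1 : R) ^ (k - p) * (k.choose p : R) * (p.choose a : R)
      = ((∑ p ∈ range (k + 1), (-1 : ℤ) ^ (k - p) * (k.choose p) * (p.choose a) : ℤ) : R) := by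
        push_cast
        rfl
    _ = if a = k then 1 else 0 := by
        rw [h]
        split_ifs <;> simp

lemma alt_sum_full (x y z : R) (k1 k2 l : ℕ) :
    ∑ p1 ∈ range (k1 + 1), ∑ p2 ∈ range (k2 + 1),
        ((k1.choose p1 * k2.choose p2 : ℕ) : R) * (-1 : R) ^ (k1 + k2 - p1 - p2)
          * ((p1 : R) * x + (p2 : R) * y + z) ^ l
      = ((k1.factorial * k2.factorial : ℕ) : R) * Cgen x y z k1 k2 l := by
  calc ∑ p1 ∈ range (k1 + 1), ∑ p2 ∈ range (k2 + 1),
        ((k1.choose p1 * k2.choose p2 : ℕ) : R) * (-1 : R) ^ (k1 + k2 - p1 - p2)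
          * ((p1 : R) * x + (p2 : R) * y + z) ^ l
      = ∑ p1 ∈ range (k1 + 1), ∑ p2 ∈ range (k2 + 1), ∑ a ∈ range (k1 + 1), ∑ b ∈ range (k2 + 1),
          ((k1.choose p1 * k2.choose p2 : ℕ) : R) * ((-1 : R) ^ (k1 - p1) * (-1 : R) ^ (k2 - p2))
            * (((p1.choose a * p2.choose b * a.factorial * b.factorial : ℕ) : R)
                * Cgen x y z a b l) := by
        refine Finset.sum_congr rfl fun p1 h1 => Finset.sum_congr rfl fun p2 h2 => ?_
        have h1' : p1 ≤ k1 := by simpa [Nat.lt_succ_iff] using h1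
        have h2' : p2 ≤ k2 := by simpa [Nat.lt_succ_iff] using h2
        rw [show k1 + k2 - p1 - p2 = (k1 - p1) + (k2 - p2) by omega, pow_add, pow_expand]
        have ext1 : ∑ a ∈ range (p1 + 1), ∑ b ∈ range (p2 + 1),
            ((p1.choose a * p2.choose b * a.factorial * b.factorial : ℕ) : R) * Cgen x y z a b l
            = ∑ a ∈ range (k1 + 1), ∑ b ∈ range (k2 + 1),
            ((p1.choose a * p2.choose b * a.factorial * b.factorial : ℕ) : R)
              * Cgen x y z a b l := by
          rw [sum_range_extend (by omega : p1 + 1 ≤ k1 + 1) _ (fun p hp => ?_)]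
          · refine Finset.sum_congr rfl fun a _ => ?_
            refine sum_range_extend (by omega) _ fun q hq => ?_
            rw [Nat.choose_eq_zero_of_lt (show p2 < q by omega)]
            simp
          · refine Finset.sum_eq_zero fun q _ => ?_
            rw [Nat.choose_eq_zero_of_lt (show p1 < p by omega)]
            simp
        rw [ext1, Finset.mul_sum]
        refine Finset.sum_congr rfl fun a _ => ?_
        rw [Finset.mul_sum]
    _ = ∑ p1 ∈ range (k1 + 1), ∑ a ∈ range (k1 + 1), ∑ p2 ∈ range (k2 + 1), ∑ b ∈ range (k2 + 1),
          ((k1.choose p1 * k2.choose p2 : ℕ) : R) * ((-1 : R) ^ (k1 - p1) * (-1 : R) ^ (k2 - p2))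
            * (((p1.choose a * p2.choose b * a.factorial * b.factorial : ℕ) : R)
                * Cgen x y z a b l) :=
        Finset.sum_congr rfl fun p1 _ => Finset.sum_comm
    _ = ∑ a ∈ range (k1 + 1), ∑ p1 ∈ range (k1 + 1), ∑ p2 ∈ range (k2 + 1), ∑ b ∈ range (k2 + 1),
          ((k1.choose p1 * k2.choose p2 : ℕ) : R) * ((-1 : R) ^ (k1 - p1) * (-1 : R) ^ (k2 - p2))
            * (((p1.choose a * p2.choose b * a.factorial * b.factorial : ℕ) : R)
                * Cgen x y z a b l) := Finset.sum_comm
    _ = ∑ a ∈ range (k1 + 1), ∑ p1 ∈ range (k1 + 1), ∑ b ∈ range (k2 + 1), ∑ p2 ∈ range (k2 + 1),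
          ((k1.choose p1 * k2.choose p2 : ℕ) : R) * ((-1 : R) ^ (k1 - p1) * (-1 : R) ^ (k2 - p2))
            * (((p1.choose a * p2.choose b * a.factorial * b.factorial : ℕ) : R)
                * Cgen x y z a b l) :=
        Finset.sum_congr rfl fun a _ => Finset.sum_congr rfl fun p1 _ => Finset.sum_comm
    _ = ∑ a ∈ range (k1 + 1), ∑ b ∈ range (k2 + 1), ∑ p1 ∈ range (k1 + 1), ∑ p2 ∈ range (k2 + 1),
          ((k1.choose p1 * k2.choose p2 : ℕ) : R) * ((-1 : R) ^ (k1 - p1) * (-1 : R) ^ (k2 - p2))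
            * (((p1.choose a * p2.choose b * a.factorial * b.factorial : ℕ) : R)
                * Cgen x y z a b l) :=
        Finset.sum_congr rfl fun a _ => Finset.sum_comm
    _ = ∑ a ∈ range (k1 + 1), ∑ b ∈ range (k2 + 1),
          (if a = k1 then (1 : R) else 0) * (if b = k2 then (1 : R) else 0)
            * (((a.factorial * b.factorial : ℕ) : R) * Cgen x y z a b l) := by
        refine Finset.sum_congr rfl fun a _ => Finset.sum_congr rfl fun b _ => ?_
        rw [← delta_sum_R k1 a, ← delta_sum_R k2 b]
        conv_rhs => rw [Finset.sum_mul_sum, Finset.sum_mul]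
        refine Finset.sum_congr rfl fun p1 _ => ?_
        conv_rhs => rw [Finset.sum_mul]
        refine Finset.sum_congr rfl fun p2 _ => ?_
        push_cast
        ring
    _ = ((k1.factorial * k2.factorial : ℕ) : R) * Cgen x y z k1 k2 l := by
        rw [Finset.sum_eq_single k1
          (fun a _ ha => Finset.sum_eq_zero fun b _ => by simp [ha])
          (fun hk => absurd (Finset.self_mem_range_succ k1) hk)]
        rw [Finset.sum_eq_single k2 (fun b _ hb => by simp [hb])
          (fun hk => absurd (Finset.self_mem_range_succ k2) hk)]
        simp

end Generic

open MvPolynomial in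
lemma Cpoly_eq (k1 k2 l : ℕ) : Cpoly k1 k2 l = Cgen (X 0) (X 1) (X 2) k1 k2 l := by
  unfold Cpoly Cgen
  simp [map_natCast]

theorem alt_sum_punctured_eq_neg (k1 k2 l : ℕ) (h : (k1, k2) ≠ (0, 0)) :
    ∑ p ∈ (Finset.range (k1 + 1) ×ˢ Finset.range (k2 + 1)).erase (k1, k2),
        (MvPolynomial.C ((k1.choose p.1 * k2.choose p.2 : ℕ) : ℤ))
          * (-1) ^ (k1 + k2 - p.1 - p.2) * Apoly p.1 p.2 ^ l =
      -∑ p ∈ (Finset.range (k1 + 1) ×ˢ Finset.range (k2 + 1)).erase (k1, k2),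
        (MvPolynomial.C ((k1.choose p.1 * k2.choose p.2
            * p.1.factorial * p.2.factorial : ℕ) : ℤ)) * Cpoly p.1 p.2 l := by
  have hmem : (k1, k2) ∈ Finset.range (k1 + 1) ×ˢ Finset.range (k2 + 1) := by
    simp
  rw [Finset.sum_erase_eq_sub hmem, Finset.sum_erase_eq_sub hmem]
  have hfull1 : ∑ p ∈ Finset.range (k1 + 1) ×ˢ Finset.range (k2 + 1),
      (MvPolynomial.C ((k1.choose p.1 * k2.choose p.2 : ℕ) : ℤ))
        * (-1) ^ (k1 + k2 - p.1 - p.2) * Apoly p.1 p.2 ^ l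
      = ((k1.factorial * k2.factorial : ℕ) : MvPolynomial (Fin 3) ℤ)
          * Cgen (MvPolynomial.X 0) (MvPolynomial.X 1) (MvPolynomial.X 2) k1 k2 l := by
    rw [Finset.sum_product]
    rw [← alt_sum_full (MvPolynomial.X 0) (MvPolynomial.X 1) (MvPolynomial.X 2) k1 k2 l]
    refine Finset.sum_congr rfl fun p1 _ => Finset.sum_congr rfl fun p2 _ => ?_
    rw [map_natCast]
    rfl
  have hfull2 : ∑ p ∈ Finset.range (k1 + 1) ×ˢ Finset.range (k2 + 1),
      (MvPolynomial.C ((k1.choose p.1 * k2.choose p.2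
          * p.1.factorial * p.2.factorial : ℕ) : ℤ)) * Cpoly p.1 p.2 l
      = Apoly k1 k2 ^ l := by
    rw [Finset.sum_product]
    have := pow_expand (MvPolynomial.X 0 : MvPolynomial (Fin 3) ℤ) (MvPolynomial.X 1) (MvPolynomial.X 2) k1 k2 l
    rw [show Apoly k1 k2 = (k1 : MvPolynomial (Fin 3) ℤ) * MvPolynomial.X 0
        + (k2 : MvPolynomial (Fin 3) ℤ) * MvPolynomial.X 1 + MvPolynomial.X 2 from rfl, this]
    refine Finset.sum_congr rfl fun p1 _ => Finset.sum_congr rfl fun p2 _ => ?_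
    rw [map_natCast, Cpoly_eq]
  rw [hfull1, hfull2]
  have e1 : (MvPolynomial.C ((k1.choose k1 * k2.choose k2 : ℕ) : ℤ))
      * (-1 : MvPolynomial (Fin 3) ℤ) ^ (k1 + k2 - k1 - k2) * Apoly k1 k2 ^ l
      = Apoly k1 k2 ^ l := by
    rw [Nat.choose_self, Nat.choose_self, show k1 + k2 - k1 - k2 = 0 by omega]
    simp
  have e2 : (MvPolynomial.C ((k1.choose k1 * k2.choose k2
      * k1.factorial * k2.factorial : ℕ) : ℤ)) * Cpoly k1 k2 l
      = ((k1.factorial * k2.factorial : ℕ) : MvPolynomial (Fin 3) ℤ)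
          * Cgen (MvPolynomial.X 0) (MvPolynomial.X 1) (MvPolynomial.X 2) k1 k2 l := by
    rw [Nat.choose_self, Nat.choose_self, Cpoly_eq, map_natCast]
    push_cast
    ring
  rw [e1, e2]
  ring
end

section
/- Let R be a finite set of r points in ℤ²_{≥0} satisfying the monomial condition. Then any vector a = (a_0,…,a_{r-1}) whose associated monic polynomial b_a(s) = s^r + a_{r-1}s^{r-1} + ⋯ + a_0 factors as ∏_{(i,j)∈R}(s - (ix+jy+z)) satisfies, for every (k1,k2) ∈ R, the equation ∑_{ℓ=0}^{r-1} C(k1,k2,ℓ)·a_ℓ = -C(k1,k2,r) in ℤ[x,y,z] (with a_r := 1, i.e., ∑_{ℓ=0}^{r} C(k1,k2,ℓ)·a_ℓ = 0). -/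
open Finset MvPolynomial

lemma signed_stirling (n k : ℕ) :
    ∑ u ∈ Finset.range (k+1), (-1:ℤ)^u * (k.choose u) * (u:ℤ)^n
      = (-1:ℤ)^k * k.factorial * stirling2 n k := by
  induction n generalizing k with
  | zero =>
    rcases k with _ | m
    · simp [stirling2]
    · have h := Int.alternating_sum_range_choose (n := m+1)
      simp only [Nat.succ_ne_zero, if_false] at h
      simp only [pow_zero, mul_one, stirling2, Nat.cast_zero, mul_zero, h]
  | succ n ih =>
    rcases k with _ | m
    · simp [stirling2]
    · have hG : (∑ w ∈ Finset.range (m+1), (-1:ℤ)^w * (m.choose w) * ((w:ℤ)+1)^n)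
          = (∑ u ∈ Finset.range (m+1), (-1:ℤ)^u * (m.choose u) * (u:ℤ)^n)
            - (∑ u ∈ Finset.range (m+2), (-1:ℤ)^u * ((m+1).choose u) * (u:ℤ)^n) := by
        rw [Finset.sum_range_succ' (fun u => (-1:ℤ)^u * ((m+1).choose u) * (u:ℤ)^n) (m+1),
            Finset.sum_range_succ' (fun u => (-1:ℤ)^u * (m.choose u) * (u:ℤ)^n) m]
        have this1 : ∑ w ∈ Finset.range (m+1), (-1:ℤ)^(w+1) * ((m+1).choose (w+1)) * ((w:ℤ)+1)^n
            = ∑ w ∈ Finset.range (m+1), ((-1:ℤ)^(w+1) * (m.choose w) * ((w:ℤ)+1)^n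
              + (-1:ℤ)^(w+1) * (m.choose (w+1)) * ((w:ℤ)+1)^n) := by
          apply Finset.sum_congr rfl; intro w _
          rw [Nat.choose_succ_succ]; push_cast; ring
        push_cast
        rw [this1, Finset.sum_add_distrib]
        have h2 : ∑ w ∈ Finset.range (m+1), (-1:ℤ)^(w+1) * (m.choose (w+1)) * ((w:ℤ)+1)^n
            = ∑ w ∈ Finset.range m, (-1:ℤ)^(w+1) * (m.choose (w+1)) * ((w:ℤ)+1)^n := by
          rw [Finset.sum_range_succ]; simp
        rw [h2]
        have h3 : ∑ w ∈ Finset.range (m+1), (-1:ℤ)^(w+1) * (m.choose w) * ((w:ℤ)+1)^n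
            = -∑ w ∈ Finset.range (m+1), (-1:ℤ)^w * (m.choose w) * ((w:ℤ)+1)^n := by
          rw [← Finset.sum_neg_distrib]
          apply Finset.sum_congr rfl; intro w _; ring
        rw [h3]
        simp only [Nat.choose_zero_right, Nat.cast_one, pow_zero, one_mul]
        ring
      have hF : (∑ u ∈ Finset.range (m+2), (-1:ℤ)^u * ((m+1).choose u) * (u:ℤ)^(n+1))
          = -((m:ℤ)+1) * (∑ w ∈ Finset.range (m+1), (-1:ℤ)^w * (m.choose w) * ((w:ℤ)+1)^n) := by
        rw [Finset.sum_range_succ' (fun u => (-1:ℤ)^u * ((m+1).choose u) * (u:ℤ)^(n+1)) (m+1)]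
        rw [Finset.mul_sum]
        have hterm : ∀ w : ℕ, (-1:ℤ)^(w+1) * ((m+1).choose (w+1)) * (((w:ℕ)+1 : ℕ):ℤ)^(n+1)
            = -((m:ℤ)+1) * ((-1:ℤ)^w * (m.choose w) * ((w:ℤ)+1)^n) := by
          intro w
          have h' : ((m:ℤ)+1) * (m.choose w) = ((m+1).choose (w+1)) * ((w:ℤ)+1) := by
            exact_mod_cast congrArg (Nat.cast : ℕ → ℤ) (Nat.add_one_mul_choose_eq m w)
          push_cast
          linear_combination ((-1:ℤ)^w * ((w:ℤ)+1)^n) * h'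
        simp only [hterm]
        simp
      rw [hF, hG, ih m, ih (m+1)]
      have hst : (stirling2 (n+1) (m+1) : ℤ) = stirling2 n m + ((m:ℤ)+1) * stirling2 n (m+1) := by
        rw [show stirling2 (n+1) (m+1) = stirling2 n m + (m+1) * stirling2 n (m+1) from rfl]
        push_cast; ring
      have hfac : ((m+1).factorial : ℤ) = ((m:ℤ)+1) * m.factorial := by
        rw [Nat.factorial_succ]; push_cast; ring
      rw [hst, hfac]
      ring

lemma Apow (u v l : ℕ) :
    (Apoly u v)^l = ∑ i1 ∈ Finset.range (l+1), ∑ i2 ∈ Finset.range (l+1-i1),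
      MvPolynomial.C (((l.choose i1 : ℕ) : ℤ) * ((l-i1).choose i2 : ℕ) * (u:ℤ)^i1 * (v:ℤ)^i2) *
        X 0 ^ i1 * X 1 ^ i2 * X 2 ^ (l - i1 - i2) := by
  rw [Apoly, add_assoc, add_pow]
  apply Finset.sum_congr rfl
  intro i1 hi1
  have hi1' : i1 ≤ l := Nat.lt_succ_iff.mp (Finset.mem_range.mp hi1)
  rw [add_pow, Finset.mul_sum, Finset.sum_mul]
  have hrange : l + 1 - i1 = (l - i1) + 1 := by omega
  rw [hrange]
  apply Finset.sum_congr rfl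
  intro i2 hi2
  have hi2' : i2 ≤ l - i1 := Nat.lt_succ_iff.mp (Finset.mem_range.mp hi2)
  have hc1 : ((u : MvPolynomial (Fin 3) ℤ)) = MvPolynomial.C (u : ℤ) := by
    simp
  have hc2 : ((v : MvPolynomial (Fin 3) ℤ)) = MvPolynomial.C (v : ℤ) := by
    simp
  rw [hc1, hc2, mul_pow, mul_pow, ← C_pow, ← C_pow]
  have hb1 : ((l.choose i1 : ℕ) : MvPolynomial (Fin 3) ℤ) = MvPolynomial.C ((l.choose i1 : ℕ) : ℤ) := by simp
  have hb2 : (((l-i1).choose i2 : ℕ) : MvPolynomial (Fin 3) ℤ) = MvPolynomial.C (((l-i1).choose i2 : ℕ) : ℤ) := by simp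
  rw [hb1, hb2]
  simp only [map_mul]
  ring

lemma swap4 {M : Type*} [AddCommMonoid M] (a b c : ℕ) (g : ℕ → ℕ) (f : ℕ → ℕ → ℕ → ℕ → M) :
    ∑ u ∈ range a, ∑ v ∈ range b, ∑ i ∈ range c, ∑ j ∈ range (g i), f u v i j
    = ∑ i ∈ range c, ∑ j ∈ range (g i), ∑ u ∈ range a, ∑ v ∈ range b, f u v i j := by
  calc ∑ u ∈ range a, ∑ v ∈ range b, ∑ i ∈ range c, ∑ j ∈ range (g i), f u v i j
      = ∑ u ∈ range a, ∑ i ∈ range c, ∑ v ∈ range b, ∑ j ∈ range (g i), f u v i j :=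
        Finset.sum_congr rfl fun u _ => Finset.sum_comm
    _ = ∑ i ∈ range c, ∑ u ∈ range a, ∑ v ∈ range b, ∑ j ∈ range (g i), f u v i j :=
        Finset.sum_comm
    _ = ∑ i ∈ range c, ∑ u ∈ range a, ∑ j ∈ range (g i), ∑ v ∈ range b, f u v i j :=
        Finset.sum_congr rfl fun i _ => Finset.sum_congr rfl fun u _ => Finset.sum_comm
    _ = ∑ i ∈ range c, ∑ j ∈ range (g i), ∑ u ∈ range a, ∑ v ∈ range b, f u v i j :=
        Finset.sum_congr rfl fun i _ => Finset.sum_comm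

lemma innerSumZ (k1 k2 i1 i2 : ℕ) (c1 c2 : ℤ) :
    ∑ u ∈ range (k1+1), ∑ v ∈ range (k2+1),
      ((-1:ℤ)^u * (k1.choose u) * (u:ℤ)^i1) * ((-1:ℤ)^v * (k2.choose v) * (v:ℤ)^i2) * c1 * c2
    = ((-1:ℤ)^k1 * k1.factorial * stirling2 i1 k1)
      * ((-1:ℤ)^k2 * k2.factorial * stirling2 i2 k2) * c1 * c2 := by
  rw [← signed_stirling i1 k1, ← signed_stirling i2 k2, Finset.sum_mul_sum,
      Finset.sum_mul, Finset.sum_mul]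
  apply Finset.sum_congr rfl
  intro u _
  rw [Finset.sum_mul, Finset.sum_mul]

lemma key_expand (k1 k2 l : ℕ) :
    ∑ u ∈ range (k1+1), ∑ v ∈ range (k2+1),
      MvPolynomial.C ((-1:ℤ)^u * (-1:ℤ)^v * (k1.choose u) * (k2.choose v)) * (Apoly u v)^l
    = MvPolynomial.C ((-1:ℤ)^k1 * (-1:ℤ)^k2 * (k1.factorial : ℤ) * (k2.factorial : ℤ))
        * Cpoly k1 k2 l := by
  have L1 : ∑ u ∈ range (k1+1), ∑ v ∈ range (k2+1),
      MvPolynomial.C ((-1:ℤ)^u * (-1:ℤ)^v * (k1.choose u) * (k2.choose v)) * (Apoly u v)^l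
    = ∑ u ∈ range (k1+1), ∑ v ∈ range (k2+1), ∑ i1 ∈ range (l+1), ∑ i2 ∈ range (l+1-i1),
        MvPolynomial.C (((-1:ℤ)^u * (k1.choose u) * (u:ℤ)^i1)
            * ((-1:ℤ)^v * (k2.choose v) * (v:ℤ)^i2)
            * ((l.choose i1 : ℕ):ℤ) * (((l-i1).choose i2 : ℕ):ℤ))
          * X 0 ^ i1 * X 1 ^ i2 * X 2 ^ (l - i1 - i2) := by
    apply Finset.sum_congr rfl; intro u _
    apply Finset.sum_congr rfl; intro v _
    rw [Apow, Finset.mul_sum]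
    apply Finset.sum_congr rfl; intro i1 _
    rw [Finset.mul_sum]
    apply Finset.sum_congr rfl; intro i2 _
    rw [← mul_assoc, ← mul_assoc, ← mul_assoc, ← C_mul]
    congr 3
    ring
  rw [L1, swap4]
  rw [Cpoly, Finset.mul_sum]
  apply Finset.sum_congr rfl; intro i1 _
  rw [Finset.mul_sum]
  apply Finset.sum_congr rfl; intro i2 _
  have hL : ∑ u ∈ range (k1+1), ∑ v ∈ range (k2+1),
      MvPolynomial.C (((-1:ℤ)^u * (k1.choose u) * (u:ℤ)^i1)
          * ((-1:ℤ)^v * (k2.choose v) * (v:ℤ)^i2)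
          * ((l.choose i1 : ℕ):ℤ) * (((l-i1).choose i2 : ℕ):ℤ))
        * (X 0 : MvPolynomial (Fin 3) ℤ) ^ i1 * X 1 ^ i2 * X 2 ^ (l - i1 - i2)
      = MvPolynomial.C (∑ u ∈ range (k1+1), ∑ v ∈ range (k2+1),
          ((-1:ℤ)^u * (k1.choose u) * (u:ℤ)^i1) * ((-1:ℤ)^v * (k2.choose v) * (v:ℤ)^i2)
          * ((l.choose i1 : ℕ):ℤ) * (((l-i1).choose i2 : ℕ):ℤ))
        * (X 0 : MvPolynomial (Fin 3) ℤ) ^ i1 * X 1 ^ i2 * X 2 ^ (l - i1 - i2) := by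
    rw [map_sum, Finset.sum_mul, Finset.sum_mul, Finset.sum_mul]
    apply Finset.sum_congr rfl; intro u _
    rw [map_sum, Finset.sum_mul, Finset.sum_mul, Finset.sum_mul]
  rw [innerSumZ] at hL
  refine hL.trans ?_
  push_cast
  simp only [C_mul]
  ring

/-- A finite set `R ⊆ ℤ²_{≥0}` satisfies the monomial condition iff it is
downward closed. -/
def MonomialCondition (R : Finset (ℕ × ℕ)) : Prop :=
  ∀ p ∈ R, ∀ q : ℕ × ℕ, q.1 ≤ p.1 → q.2 ≤ p.2 → q ∈ R

theorem system_solution (R : Finset (ℕ × ℕ)) (hR : MonomialCondition R) (r : ℕ)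
    (hr : r = R.card)
    (b : Polynomial (MvPolynomial (Fin 3) ℤ))
    (hb : b = ∏ p ∈ R, (Polynomial.X - Polynomial.C (Apoly p.1 p.2))) :
    ∀ p ∈ R, ∑ l ∈ Finset.range (r + 1), Cpoly p.1 p.2 l * b.coeff l = 0 := by
  rintro ⟨k1, k2⟩ hp
  have hc0 : ((-1:ℤ)^k1 * (-1:ℤ)^k2 * (k1.factorial : ℤ) * (k2.factorial : ℤ)) ≠ 0 := by
    apply mul_ne_zero
    apply mul_ne_zero
    apply mul_ne_zero
    · exact pow_ne_zero _ (by norm_num)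
    · exact pow_ne_zero _ (by norm_num)
    · exact_mod_cast Nat.factorial_ne_zero k1
    · exact_mod_cast Nat.factorial_ne_zero k2
  have hdeg : b.natDegree < r + 1 := by
    rw [hb, Polynomial.natDegree_prod]
    · simp only [Polynomial.natDegree_X_sub_C]
      rw [Finset.sum_const, smul_eq_mul, mul_one, hr]
      omega
    · intro i _
      exact Polynomial.X_sub_C_ne_zero _
  have heval : ∀ u v : ℕ, u ≤ k1 → v ≤ k2 →
      ∑ l ∈ Finset.range (r+1), (Apoly u v)^l * b.coeff l = 0 := by
    intro u v hu hv
    have h1 : ∑ l ∈ Finset.range (r+1), (Apoly u v)^l * b.coeff l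
        = Polynomial.eval (Apoly u v) b := by
      rw [Polynomial.eval_eq_sum_range' hdeg]
      apply Finset.sum_congr rfl
      intro l _
      ring
    rw [h1, hb, Polynomial.eval_prod]
    apply Finset.prod_eq_zero (hR (k1,k2) hp (u,v) hu hv)
    simp
  suffices h : MvPolynomial.C ((-1:ℤ)^k1 * (-1:ℤ)^k2 * (k1.factorial : ℤ) * (k2.factorial : ℤ))
      * (∑ l ∈ Finset.range (r + 1), Cpoly k1 k2 l * b.coeff l) = 0 by
    rcases mul_eq_zero.mp h with h' | h'
    · exact absurd (MvPolynomial.C_eq_zero.mp h') hc0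
    · exact h'
  rw [Finset.mul_sum]
  have hterm : ∀ l : ℕ, MvPolynomial.C ((-1:ℤ)^k1 * (-1:ℤ)^k2 * (k1.factorial : ℤ) * (k2.factorial : ℤ))
      * (Cpoly k1 k2 l * b.coeff l)
      = ∑ u ∈ Finset.range (k1+1), ∑ v ∈ Finset.range (k2+1),
          MvPolynomial.C ((-1:ℤ)^u * (-1:ℤ)^v * (k1.choose u) * (k2.choose v))
            * ((Apoly u v)^l * b.coeff l) := by
    intro l
    rw [← mul_assoc, ← key_expand k1 k2 l, Finset.sum_mul]
    apply Finset.sum_congr rfl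
    intro u _
    rw [Finset.sum_mul]
    apply Finset.sum_congr rfl
    intro v _
    rw [mul_assoc]
  calc ∑ l ∈ Finset.range (r+1),
        MvPolynomial.C ((-1:ℤ)^k1 * (-1:ℤ)^k2 * (k1.factorial : ℤ) * (k2.factorial : ℤ))
          * (Cpoly k1 k2 l * b.coeff l)
      = ∑ l ∈ Finset.range (r+1), ∑ u ∈ Finset.range (k1+1), ∑ v ∈ Finset.range (k2+1),
          MvPolynomial.C ((-1:ℤ)^u * (-1:ℤ)^v * (k1.choose u) * (k2.choose v))
            * ((Apoly u v)^l * b.coeff l) := Finset.sum_congr rfl fun l _ => hterm l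
    _ = ∑ u ∈ Finset.range (k1+1), ∑ l ∈ Finset.range (r+1), ∑ v ∈ Finset.range (k2+1),
          MvPolynomial.C ((-1:ℤ)^u * (-1:ℤ)^v * (k1.choose u) * (k2.choose v))
            * ((Apoly u v)^l * b.coeff l) := Finset.sum_comm
    _ = ∑ u ∈ Finset.range (k1+1), ∑ v ∈ Finset.range (k2+1), ∑ l ∈ Finset.range (r+1),
          MvPolynomial.C ((-1:ℤ)^u * (-1:ℤ)^v * (k1.choose u) * (k2.choose v))
            * ((Apoly u v)^l * b.coeff l) :=
        Finset.sum_congr rfl fun u _ => Finset.sum_comm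
    _ = 0 := by
        apply Finset.sum_eq_zero
        intro u hu
        apply Finset.sum_eq_zero
        intro v hv
        rw [← Finset.mul_sum,
            heval u v (Nat.lt_succ_iff.mp (Finset.mem_range.mp hu))
              (Nat.lt_succ_iff.mp (Finset.mem_range.mp hv)), mul_zero]
end

section
/- Let R be a finite downward-closed set of r ≥ 1 points in ℤ²_{≥0}, and let ℓ ≥ r. For any multiplicities n_{ij} > 0 with ∑_{(i,j)∈R} n_{ij} = ℓ, the coefficients a = (a_0,…,a_{ℓ-1}) of the polynomial b_a(s) = ∏_{(i,j)∈R}(s - (ix+jy+z))^{n_{ij}} = s^ℓ + a_{ℓ-1}s^{ℓ-1} + ⋯ + a_0 satisfy, for every (k1,k2) ∈ R: ∑_{n=0}^{ℓ} C(k1,k2,n)·a_n = 0 in ℤ[x,y,z], where a_ℓ := 1. -/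
@[simp] lemma stirling2_zero_succ (k : ℕ) : stirling2 0 (k+1) = 0 := rfl
@[simp] lemma stirling2_succ_zero (n : ℕ) : stirling2 (n+1) 0 = 0 := rfl
@[simp] lemma stirling2_zero_zero : stirling2 0 0 = 1 := rfl
lemma stirling2_succ (n k : ℕ) :
    stirling2 (n+1) (k+1) = stirling2 n k + (k + 1) * stirling2 n (k + 1) := rfl

/-- `S(i+1,k+1) = ∑_t C(i,t) S(t,k)`. -/
lemma lemB : ∀ (i k : ℕ), stirling2 (i+1) (k+1)
    = ∑ t ∈ Finset.range (i+1), i.choose t * stirling2 t k := by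
  intro i
  induction i with
  | zero => intro k; simp [stirling2_succ]
  | succ i ih =>
    intro k
    have hRHS : ∑ t ∈ Finset.range (i+2), (i+1).choose t * stirling2 t k
        = ∑ t ∈ Finset.range (i+1), i.choose t * stirling2 t k
          + ∑ t ∈ Finset.range (i+1), i.choose t * stirling2 (t+1) k := by
      rw [Finset.sum_range_succ' (fun t => (i+1).choose t * stirling2 t k)]
      simp only [Nat.choose_succ_succ, add_mul, Finset.sum_add_distrib,
        Nat.choose_zero_right, Nat.succ_eq_add_one]
      have h2 : ∑ t ∈ Finset.range (i+1), i.choose (t+1) * stirling2 (t+1) k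
          + i.choose 0 * stirling2 0 k
          = ∑ t ∈ Finset.range (i+1), i.choose t * stirling2 t k := by
        rw [← Finset.sum_range_succ' (fun t => i.choose t * stirling2 t k),
          Finset.sum_range_succ]
        simp
      simp only [Nat.choose_zero_right] at h2
      omega
    show stirling2 (i+1+1) (k+1) = _
    rw [stirling2_succ, ih k, hRHS]
    cases k with
    | zero => simp
    | succ k' =>
      have hsplit : ∑ t ∈ Finset.range (i+1), i.choose t * stirling2 (t+1) (k'+1)
          = ∑ t ∈ Finset.range (i+1), i.choose t * stirling2 t k'
            + (k'+1) * ∑ t ∈ Finset.range (i+1), i.choose t * stirling2 t (k'+1) := by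
        rw [Finset.mul_sum, ← Finset.sum_add_distrib]
        refine Finset.sum_congr rfl fun t _ => ?_
        rw [stirling2_succ]; ring
      rw [hsplit, ← ih k', stirling2_succ]
      ring

lemma neg_one_pow_sub {k j : ℕ} (h : j ≤ k) : (-1:ℤ)^(k-j) = (-1)^k * (-1)^j := by
  rw [← pow_add]
  have : k + j = (k - j) + 2*j := by omega
  rw [this, pow_add, pow_mul]
  norm_num

/-- `∑_j (-1)^{k-j} C(k,j) j^i = k! S(i,k)`. -/
lemma lemA (i k : ℕ) :
    (∑ j ∈ Finset.range (k+1), (-1:ℤ)^(k-j) * (k.choose j) * (j:ℤ)^i)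
      = (k.factorial : ℤ) * stirling2 i k := by
  induction i using Nat.strong_induction_on generalizing k with
  | _ i ih =>
  match i with
  | 0 =>
    cases k with
    | zero => simp
    | succ k' =>
      rw [show ((k'+1).factorial : ℤ) * stirling2 0 (k'+1) = 0 by simp]
      calc ∑ j ∈ Finset.range (k'+1+1), (-1:ℤ)^(k'+1-j) * ((k'+1).choose j) * (j:ℤ)^0
          = (-1:ℤ)^(k'+1) * ∑ j ∈ Finset.range (k'+1+1), (-1:ℤ)^j * ((k'+1).choose j) := by
            rw [Finset.mul_sum]
            refine Finset.sum_congr rfl fun j hj => ?_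
            rw [neg_one_pow_sub (Nat.lt_succ_iff.mp (Finset.mem_range.mp hj))]
            ring
        _ = 0 := by rw [Int.alternating_sum_range_choose]; simp
  | (i+1) =>
    cases k with
    | zero => simp
    | succ k' =>
      rw [Finset.sum_range_succ' (fun j => (-1:ℤ)^(k'+1-j) * ((k'+1).choose j) * (j:ℤ)^(i+1))]
      have hz : (-1:ℤ)^(k'+1-0) * ((k'+1).choose 0) * ((0:ℕ):ℤ)^(i+1) = 0 := by simp
      rw [hz, add_zero]
      have step1 : ∀ j ∈ Finset.range (k'+1),
          (-1:ℤ)^(k'+1-(j+1)) * (((k'+1).choose (j+1) : ℕ) : ℤ) * (((j:ℕ)+1 : ℕ):ℤ)^(i+1)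
          = ∑ t ∈ Finset.range (i+1),
              ((k':ℤ)+1) * ((-1:ℤ)^(k'-j) * (k'.choose j) * (i.choose t) * (j:ℤ)^t) := by
        intro j hj
        have e2 : (((k'+1).choose (j+1) : ℕ) : ℤ) * ((j:ℤ)+1) = ((k':ℤ)+1) * (k'.choose j) := by
          exact_mod_cast congrArg (Nat.cast : ℕ → ℤ) (Nat.add_one_mul_choose_eq k' j).symm
        push_cast
        rw [pow_succ, show ((j:ℤ)+1)^i = ∑ t ∈ Finset.range (i+1),
            (j:ℤ)^t * 1^(i-t) * (i.choose t) from add_pow (j:ℤ) 1 i, Finset.sum_mul,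
          Finset.mul_sum]
        refine Finset.sum_congr rfl fun t ht => ?_
        have h1 : (1:ℤ)^(i-t) = 1 := one_pow _
        rw [h1]
        linear_combination ((-1:ℤ)^(k'-j) * ((j:ℤ)^t * (i.choose t))) * e2
      rw [Finset.sum_congr rfl step1]
      simp only [← Finset.mul_sum]
      rw [Finset.sum_comm]
      have step2 : ∀ t ∈ Finset.range (i+1),
          (∑ j ∈ Finset.range (k'+1), (-1:ℤ)^(k'-j) * (k'.choose j) * (i.choose t) * (j:ℤ)^t)
          = (i.choose t : ℤ) * ((k'.factorial : ℤ) * stirling2 t k') := by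
        intro t ht
        rw [← ih t (Finset.mem_range.mp ht) k', Finset.mul_sum]
        exact Finset.sum_congr rfl fun j _ => by ring
      rw [Finset.sum_congr rfl step2]
      rw [show stirling2 (i+1) (k'+1) = ∑ t ∈ Finset.range (i+1), i.choose t * stirling2 t k'
        from lemB i k', Nat.factorial_succ]
      push_cast [Finset.mul_sum]
      refine Finset.sum_congr rfl fun t _ => by ring

open MvPolynomial Finset

lemma cpoly_eq (k1 k2 m : ℕ) : Cpoly k1 k2 m =
    ∑ i1 ∈ range (m+1), ∑ i2 ∈ range (m+1),
      (C ((m.choose i1 * (m - i1).choose i2 * stirling2 i1 k1 * stirling2 i2 k2 : ℕ) : ℤ)) *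
        X 0 ^ i1 * X 1 ^ i2 * X 2 ^ (m - i1 - i2) := by
  unfold Cpoly
  refine Finset.sum_congr rfl fun i1 h1 => ?_
  refine Finset.sum_subset (fun x hx => ?_) (fun i2 h2 hn2 => ?_)
  · simp only [mem_range] at *; omega
  · have : m - i1 < i2 := by simp only [mem_range] at *; omega
    rw [Nat.choose_eq_zero_of_lt this]
    simp

lemma apow (j1 j2 m : ℕ) : (Apoly j1 j2)^m =
    ∑ i1 ∈ range (m+1), ∑ i2 ∈ range (m+1),
      C (((m.choose i1 * (m - i1).choose i2 : ℕ) : ℤ) * (j1:ℤ)^i1 * (j2:ℤ)^i2) *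
        X 0 ^ i1 * X 1 ^ i2 * X 2 ^ (m - i1 - i2) := by
  have expand2 : ∀ i1 ∈ range (m+1),
      ((j2 : MvPolynomial (Fin 3) ℤ) * X 1 + X 2)^(m-i1)
      = ∑ i2 ∈ range (m+1), ((j2 : MvPolynomial (Fin 3) ℤ) * X 1)^i2 * X 2^(m-i1-i2)
          * (((m-i1).choose i2 : ℕ) : MvPolynomial (Fin 3) ℤ) := by
    intro i1 h1
    rw [add_pow]
    refine Finset.sum_subset (fun x hx => ?_) (fun i2 h2 hn2 => ?_)
    · simp only [mem_range] at *; omega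
    · have : m - i1 < i2 := by simp only [mem_range] at *; omega
      rw [Nat.choose_eq_zero_of_lt this]
      simp
  rw [show Apoly j1 j2 = ((j1 : MvPolynomial (Fin 3) ℤ) * X 0)
      + ((j2 : MvPolynomial (Fin 3) ℤ) * X 1 + X 2) by rw [Apoly]; ring]
  rw [add_pow]
  refine Finset.sum_congr rfl fun i1 h1 => ?_
  rw [expand2 i1 h1, Finset.mul_sum, Finset.sum_mul]
  refine Finset.sum_congr rfl fun i2 h2 => ?_
  simp only [map_mul, map_pow, map_natCast]
  push_cast
  ring

lemma key_s12 (k1 k2 m : ℕ) :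
    C ((k1.factorial * k2.factorial : ℕ) : ℤ) * Cpoly k1 k2 m
    = ∑ j1 ∈ range (k1+1), ∑ j2 ∈ range (k2+1),
        C ((-1:ℤ)^(k1-j1) * (-1:ℤ)^(k2-j2) * (k1.choose j1) * (k2.choose j2))
          * (Apoly j1 j2)^m := by
  set I := range (m+1)
  set J1 := range (k1+1)
  set J2 := range (k2+1)
  have hL : C ((k1.factorial * k2.factorial : ℕ) : ℤ) * Cpoly k1 k2 m
      = ∑ i1 ∈ I, ∑ i2 ∈ I, ∑ j1 ∈ J1, ∑ j2 ∈ J2,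
          C ((-1:ℤ)^(k1-j1) * (-1:ℤ)^(k2-j2) * (k1.choose j1) * (k2.choose j2))
            * C (((m.choose i1 * (m - i1).choose i2 : ℕ) : ℤ) * (j1:ℤ)^i1 * (j2:ℤ)^i2)
            * X 0 ^ i1 * X 1 ^ i2 * X 2 ^ (m - i1 - i2) := by
    rw [cpoly_eq]
    simp only [Finset.mul_sum]
    refine Finset.sum_congr rfl fun i1 _ => Finset.sum_congr rfl fun i2 _ => ?_
    have hc : ((k1.factorial * k2.factorial : ℕ) : ℤ)
        * ((m.choose i1 * (m - i1).choose i2 * stirling2 i1 k1 * stirling2 i2 k2 : ℕ) : ℤ)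
        = ∑ j1 ∈ J1, ∑ j2 ∈ J2,
            ((-1:ℤ)^(k1-j1) * (-1:ℤ)^(k2-j2) * (k1.choose j1) * (k2.choose j2))
            * (((m.choose i1 * (m - i1).choose i2 : ℕ) : ℤ) * (j1:ℤ)^i1 * (j2:ℤ)^i2) := by
      have h1 := lemA i1 k1
      have h2 := lemA i2 k2
      calc ((k1.factorial * k2.factorial : ℕ) : ℤ)
          * ((m.choose i1 * (m - i1).choose i2 * stirling2 i1 k1 * stirling2 i2 k2 : ℕ) : ℤ)
          = ((m.choose i1 * (m - i1).choose i2 : ℕ) : ℤ)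
            * ((k1.factorial : ℤ) * stirling2 i1 k1) * ((k2.factorial : ℤ) * stirling2 i2 k2) := by
            push_cast; ring
        _ = ((m.choose i1 * (m - i1).choose i2 : ℕ) : ℤ)
            * (∑ j1 ∈ J1, (-1:ℤ)^(k1-j1) * (k1.choose j1) * (j1:ℤ)^i1)
            * (∑ j2 ∈ J2, (-1:ℤ)^(k2-j2) * (k2.choose j2) * (j2:ℤ)^i2) := by
            rw [h1, h2]
        _ = _ := by
            rw [mul_assoc, Finset.sum_mul_sum]
            simp only [Finset.mul_sum]
            refine Finset.sum_congr rfl fun j1 _ => Finset.sum_congr rfl fun j2 _ => by ring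
    have e0 : ∀ (a b : ℤ), (C a : MvPolynomial (Fin 3) ℤ)
        * (C b * X 0 ^ i1 * X 1 ^ i2 * X 2 ^ (m-i1-i2))
        = C (a*b) * X 0 ^ i1 * X 1 ^ i2 * X 2 ^ (m-i1-i2) := fun a b => by
      rw [map_mul]; ring
    rw [e0, hc]
    simp only [map_sum, map_mul, Finset.sum_mul]
  have hR : ∑ j1 ∈ J1, ∑ j2 ∈ J2,
        C ((-1:ℤ)^(k1-j1) * (-1:ℤ)^(k2-j2) * (k1.choose j1) * (k2.choose j2))
          * (Apoly j1 j2)^m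
      = ∑ j1 ∈ J1, ∑ j2 ∈ J2, ∑ i1 ∈ I, ∑ i2 ∈ I,
          C ((-1:ℤ)^(k1-j1) * (-1:ℤ)^(k2-j2) * (k1.choose j1) * (k2.choose j2))
            * C (((m.choose i1 * (m - i1).choose i2 : ℕ) : ℤ) * (j1:ℤ)^i1 * (j2:ℤ)^i2)
            * X 0 ^ i1 * X 1 ^ i2 * X 2 ^ (m - i1 - i2) := by
    refine Finset.sum_congr rfl fun j1 _ => Finset.sum_congr rfl fun j2 _ => ?_
    rw [apow]
    simp only [Finset.mul_sum]
    refine Finset.sum_congr rfl fun i1 _ => Finset.sum_congr rfl fun i2 _ => by ring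
  rw [hL, hR]
  calc ∑ i1 ∈ I, ∑ i2 ∈ I, ∑ j1 ∈ J1, ∑ j2 ∈ J2, _
      = ∑ i1 ∈ I, ∑ j1 ∈ J1, ∑ i2 ∈ I, ∑ j2 ∈ J2, _ :=
        Finset.sum_congr rfl fun i1 _ => Finset.sum_comm
    _ = ∑ j1 ∈ J1, ∑ i1 ∈ I, ∑ i2 ∈ I, ∑ j2 ∈ J2, _ := Finset.sum_comm
    _ = ∑ j1 ∈ J1, ∑ i1 ∈ I, ∑ j2 ∈ J2, ∑ i2 ∈ I, _ :=
        Finset.sum_congr rfl fun j1 _ => Finset.sum_congr rfl fun i1 _ => Finset.sum_comm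
    _ = ∑ j1 ∈ J1, ∑ j2 ∈ J2, ∑ i1 ∈ I, ∑ i2 ∈ I, _ :=
        Finset.sum_congr rfl fun j1 _ => Finset.sum_comm

theorem system_solution_with_multiplicities (R : Finset (ℕ × ℕ))
    (hR : MonomialCondition R) (hr : 1 ≤ R.card) (l : ℕ) (hl : R.card ≤ l)
    (n : ℕ × ℕ → ℕ) (hn : ∀ p ∈ R, 0 < n p) (hsum : ∑ p ∈ R, n p = l)
    (b : Polynomial (MvPolynomial (Fin 3) ℤ))
    (hb : b = ∏ p ∈ R, (Polynomial.X - Polynomial.C (Apoly p.1 p.2)) ^ n p) :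
    ∀ p ∈ R, ∑ m ∈ Finset.range (l + 1), Cpoly p.1 p.2 m * b.coeff m = 0 := by
  intro p hp
  set k1 := p.1
  set k2 := p.2
  have hdeg : b.natDegree < l + 1 := by
    rw [hb, Polynomial.natDegree_prod_of_monic _ _
      (fun q _ => (Polynomial.monic_X_sub_C _).pow _)]
    simp only [Polynomial.natDegree_pow, Polynomial.natDegree_X_sub_C, mul_one]
    omega
  have heval : ∀ j1 j2, (j1, j2) ∈ R → Polynomial.eval (Apoly j1 j2) b = 0 := by
    intro j1 j2 hmem
    rw [hb, Polynomial.eval_prod]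
    refine Finset.prod_eq_zero hmem ?_
    rw [Polynomial.eval_pow, Polynomial.eval_sub, Polynomial.eval_X, Polynomial.eval_C,
      sub_self, zero_pow (hn _ hmem).ne']
  have main : C ((k1.factorial * k2.factorial : ℕ) : ℤ)
      * ∑ m ∈ Finset.range (l + 1), Cpoly k1 k2 m * b.coeff m = 0 := by
    rw [Finset.mul_sum]
    have e1 : ∀ m ∈ Finset.range (l+1),
        C ((k1.factorial * k2.factorial : ℕ) : ℤ) * (Cpoly k1 k2 m * b.coeff m)
        = ∑ j1 ∈ Finset.range (k1+1), ∑ j2 ∈ Finset.range (k2+1),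
            C ((-1:ℤ)^(k1-j1) * (-1:ℤ)^(k2-j2) * (k1.choose j1) * (k2.choose j2))
              * (b.coeff m * (Apoly j1 j2)^m) := by
      intro m _
      rw [← mul_assoc, key_s12]
      simp only [Finset.sum_mul]
      refine Finset.sum_congr rfl fun j1 _ => Finset.sum_congr rfl fun j2 _ => by ring
    rw [Finset.sum_congr rfl e1, Finset.sum_comm]
    refine Finset.sum_eq_zero fun j1 hj1 => ?_
    rw [Finset.sum_comm]
    refine Finset.sum_eq_zero fun j2 hj2 => ?_
    rw [← Finset.mul_sum, ← Polynomial.eval_eq_sum_range' hdeg]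
    rw [heval j1 j2 (hR p hp (j1, j2)
      (Nat.lt_succ_iff.mp (Finset.mem_range.mp hj1))
      (Nat.lt_succ_iff.mp (Finset.mem_range.mp hj2))), mul_zero]
  rcases mul_eq_zero.mp main with h | h
  · exact absurd (MvPolynomial.C_eq_zero.mp h) (by positivity)
  · exact h
end
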